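/- arXiv:2410.01682 — 3 statements merged into one kernel-verified Lean document; each statement's English description precedes it below -/
import Mathlib

section
/- Let H be an r-uniform multihypergraph with r ≥ 2. Then 2r·surp_r(H) ≥ surp_{r−1}(H). More precisely, if V(H) admits an (r−1)-partition achieving mc_{r−1}(H), then moving each vertex independently with probability 1/r into a new r-th part yields an r-partition whose expected number of cut edges is at least (r!/r^r)·e(H) + (1/(2r))·surp_{r−1}(H). -/
set_option linter.unusedSectionVars false
set_option maxHeartbeats 1000000

/-- The Stirling number of the second kind `S(r,k)`. -/
def stirlingSecond (r k : ℕ) : ℕ :=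
  (Finset.univ.filter fun f : Fin r → Fin k => Function.Surjective f).card / Nat.factorial k

variable {V : Type*} [Fintype V] [DecidableEq V]

/-- The number of edges (with multiplicity `w`) cut by the `k`-partition `f`. -/
def cutCount {k : ℕ} (w : Finset V → ℕ) (f : V → Fin k) : ℝ :=
  ∑ e : Finset V, if ∀ j : Fin k, ∃ v ∈ e, f v = j then (w e : ℝ) else 0

/-- The maximum `k`-cut. -/
noncomputable def mcut (w : Finset V → ℕ) (k : ℕ) : ℝ :=
  ⨆ f : V → Fin k, cutCount w f

/-- The number of edges, with multiplicity. -/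
def totalEdges (w : Finset V → ℕ) : ℝ :=
  ∑ e : Finset V, (w e : ℝ)

/-- The `k`-surplus of an `r`-uniform multihypergraph:
`surp_k(H) = mc_k(H) − (S(r,k)·k!/k^r)·m`. -/
noncomputable def surpk (w : Finset V → ℕ) (r k : ℕ) : ℝ :=
  mcut w k - (stirlingSecond r k * Nat.factorial k : ℝ) / k ^ r * totalEdges w

open Finset Function

section AuxLemmas

lemma cutCount_nonneg {k : ℕ} (w : Finset V → ℕ) (f : V → Fin k) : 0 ≤ cutCount w f := by
  refine Finset.sum_nonneg fun e _ => ?_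
  split <;> positivity

lemma totalEdges_nonneg (w : Finset V → ℕ) : 0 ≤ totalEdges w :=
  Finset.sum_nonneg fun e _ => by positivity

lemma cutCount_le_mcut {k : ℕ} (w : Finset V → ℕ) (f : V → Fin k) : cutCount w f ≤ mcut w k :=
  le_ciSup (Set.Finite.bddAbove (Set.finite_range _)) f

lemma mcut_nonneg {k : ℕ} (hk : 0 < k) (w : Finset V → ℕ) : 0 ≤ mcut w k :=
  le_trans (cutCount_nonneg w (fun _ => ⟨0, hk⟩)) (cutCount_le_mcut w _)

lemma exists_mcut {k : ℕ} (hk : 0 < k) (w : Finset V → ℕ) :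
    ∃ g : V → Fin k, cutCount w g = mcut w k := by
  have : Nonempty (Fin k) := ⟨⟨0, hk⟩⟩
  obtain ⟨g, hg⟩ := Finite.exists_max (cutCount w (k := k))
  exact ⟨g, le_antisymm (cutCount_le_mcut w g) (ciSup_le hg)⟩

lemma sum_powerset_pow (x y : ℝ) (s : Finset V) :
    ∑ t ∈ s.powerset, x ^ t.card * y ^ (s.card - t.card) = (x + y) ^ s.card := by
  rw [← Finset.prod_const, Finset.prod_add]
  refine Finset.sum_congr rfl fun t ht => ?_
  rw [Finset.mem_powerset] at ht
  rw [Finset.prod_const, Finset.prod_const, Finset.card_sdiff_of_subset ht]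

lemma sum_weight_inter (x y : ℝ) (hxy : x + y = 1) (e A : Finset V) (hA : A ⊆ e) :
    ∑ T ∈ Finset.univ.filter (fun T : Finset V => T ∩ e = A),
      x ^ T.card * y ^ (Fintype.card V - T.card)
      = x ^ A.card * y ^ (e.card - A.card) := by
  have hcard : ∀ S ∈ (Finset.univ \ e).powerset, (A ∪ S).card = A.card + S.card := by
    intro S hS
    rw [Finset.mem_powerset] at hS
    rw [Finset.card_union_of_disjoint]
    exact Finset.disjoint_left.2 fun a haA haS => (Finset.mem_sdiff.1 (hS haS)).2 (hA haA)
  rw [Finset.sum_bij' (fun T _ => T \ e) (fun S _ => A ∪ S)]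
  · have h1 : ∀ S ∈ (Finset.univ \ e).powerset,
        x ^ (A ∪ S).card * y ^ (Fintype.card V - (A ∪ S).card)
        = (x ^ A.card * y ^ (e.card - A.card)) *
          (x ^ S.card * y ^ ((Finset.univ \ e).card - S.card)) := by
      intro S hS
      have hAS := hcard S hS
      have hSc : S.card ≤ (Finset.univ \ e : Finset V).card :=
        Finset.card_le_card (Finset.mem_powerset.1 hS)
      have hec : (Finset.univ \ e : Finset V).card = Fintype.card V - e.card := by
        rw [Finset.card_sdiff_of_subset (Finset.subset_univ e), Finset.card_univ]
      have hAc : A.card ≤ e.card := Finset.card_le_card hA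
      have heV : e.card ≤ Fintype.card V := by
        simpa using Finset.card_le_card (Finset.subset_univ e)
      rw [hAS]
      rw [show Fintype.card V - (A.card + S.card)
          = (e.card - A.card) + ((Finset.univ \ e : Finset V).card - S.card) by omega]
      rw [pow_add, pow_add]
      ring
    rw [Finset.sum_congr rfl h1, ← Finset.mul_sum, sum_powerset_pow, hxy, one_pow, mul_one]
  · intro T hT
    rw [Finset.mem_filter] at hT
    simp only [Finset.mem_powerset]
    intro a ha
    simp only [Finset.mem_sdiff, Finset.mem_univ, true_and]
    exact (Finset.mem_sdiff.1 ha).2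
  · intro S hS
    rw [Finset.mem_powerset] at hS
    simp only [Finset.mem_filter, Finset.mem_univ, true_and]
    rw [Finset.union_inter_distrib_right, Finset.inter_eq_left.2 hA]
    have : S ∩ e = ∅ := by
      rw [Finset.eq_empty_iff_forall_notMem]
      intro a ha
      obtain ⟨haS, hae⟩ := Finset.mem_inter.1 ha
      exact (Finset.mem_sdiff.1 (hS haS)).2 hae
    rw [this, Finset.union_empty]
  · intro T hT
    rw [Finset.mem_filter] at hT
    ext a
    simp only [Finset.mem_union, Finset.mem_sdiff, ← hT.2, Finset.mem_inter]
    tauto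
  · intro S hS
    rw [Finset.mem_powerset] at hS
    ext a
    simp only [Finset.mem_sdiff, Finset.mem_union]
    constructor
    · rintro ⟨h1 | h1, h2⟩
      · exact absurd (hA h1) h2
      · exact h1
    · intro h1
      exact ⟨Or.inr h1, fun h2 => (Finset.mem_sdiff.1 (hS h1)).2 h2⟩
  · intro T hT
    rw [Finset.mem_filter] at hT
    have : A ∪ T \ e = T := by
      ext a
      simp only [Finset.mem_union, Finset.mem_sdiff, ← hT.2, Finset.mem_inter]
      tauto
    rw [this]

lemma weight_sum_one (r : ℕ) (hr : 2 ≤ r) :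
    ∑ T : Finset V, (1/(r:ℝ)) ^ T.card * (((r:ℝ) - 1)/r) ^ (Fintype.card V - T.card) = 1 := by
  have hR0 : (0:ℝ) < (r:ℝ) := by exact_mod_cast (by omega : 0 < r)
  have hxy : (1/(r:ℝ)) + ((r:ℝ) - 1)/r = 1 := by field_simp; ring
  have hfilter : Finset.univ.filter (fun T : Finset V => T ∩ ∅ = ∅) = Finset.univ := by
    apply Finset.filter_true_of_mem; intro T _; simp
  rw [← hfilter, sum_weight_inter _ _ hxy ∅ ∅ (subset_refl _)]
  norm_num

end AuxLemmas

section Stirling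

def coll {r : ℕ} (a b : Fin r) (hab : a.val < b.val) : Fin r → Fin (r - 1) := fun k =>
  if h1 : k.val < b.val then ⟨k.val, by have := b.isLt; omega⟩
  else if h2 : k.val = b.val then ⟨a.val, by have := b.isLt; omega⟩
  else ⟨k.val - 1, by have := k.isLt; omega⟩

lemma coll_surj {r : ℕ} (a b : Fin r) (hab : a.val < b.val) : Surjective (coll a b hab) := by
  intro j
  by_cases hj : j.val < b.val
  · refine ⟨⟨j.val, by have := b.isLt; omega⟩, ?_⟩
    simp only [coll, Fin.ext_iff]
    split_ifs <;> simp_all <;> omega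
  · refine ⟨⟨j.val + 1, by have := j.isLt; omega⟩, ?_⟩
    simp only [coll, Fin.ext_iff]
    split_ifs <;> simp_all <;> omega

lemma coll_pair {r : ℕ} (a b : Fin r) (hab : a.val < b.val) :
    coll a b hab a = coll a b hab b := by
  simp only [coll, Fin.ext_iff]
  split_ifs <;> simp_all <;> omega

lemma coll_eq_of {r : ℕ} (a b : Fin r) (hab : a.val < b.val) {x y : Fin r} (hxy : x ≠ y)
    (h : coll a b hab x = coll a b hab y) : (x = a ∧ y = b) ∨ (x = b ∧ y = a) := by
  have hxy' : x.val ≠ y.val := fun hh => hxy (Fin.ext hh)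
  suffices hs : (x.val = a.val ∧ y.val = b.val) ∨ (x.val = b.val ∧ y.val = a.val) by
    rcases hs with ⟨h1, h2⟩ | ⟨h1, h2⟩
    · exact Or.inl ⟨Fin.ext h1, Fin.ext h2⟩
    · exact Or.inr ⟨Fin.ext h1, Fin.ext h2⟩
  simp only [coll] at h
  split_ifs at h <;> simp only [Fin.mk.injEq] at h <;> omega

lemma card_filter_lt_pairs (r : ℕ) :
    ((Finset.univ : Finset (Fin r)).powersetCard 2).card = r.choose 2 := by
  rw [Finset.card_powersetCard, Finset.card_univ, Fintype.card_fin]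

lemma min'_max'_pair {r : ℕ} (s : Finset (Fin r)) (hs : s.card = 2) :
    ∃ (hne : s.Nonempty), (s.min' hne).val < (s.max' hne).val ∧ s = {s.min' hne, s.max' hne} := by
  have hne : s.Nonempty := Finset.card_pos.1 (by omega)
  have hlt : s.min' hne < s.max' hne := Finset.min'_lt_max'_of_card s (by omega)
  refine ⟨hne, hlt, ?_⟩
  refine (Finset.eq_of_subset_of_card_le ?_ ?_).symm
  · intro a ha
    rcases Finset.mem_insert.1 ha with h | h
    · exact h ▸ Finset.min'_mem s hne
    · exact (Finset.mem_singleton.1 h) ▸ Finset.max'_mem s hne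
  · rw [hs, Finset.card_insert_of_notMem (by simp [Fin.ne_of_lt hlt]), Finset.card_singleton]

noncomputable def pairFun {r : ℕ} (hr : 2 ≤ r) (s : Finset (Fin r)) : Fin r → Fin (r - 1) :=
  if h : 1 < s.card then
    coll (s.min' (Finset.card_pos.1 (by omega))) (s.max' (Finset.card_pos.1 (by omega)))
      (Finset.min'_lt_max'_of_card s h)
  else fun _ => ⟨0, by omega⟩

lemma stirling_lower (r : ℕ) (hr : 2 ≤ r) :
    r.choose 2 * Nat.factorial (r - 1) ≤
      ((Finset.univ.filter fun f : Fin r → Fin (r - 1) => Function.Surjective f)).card := by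
  classical
  have key := Finset.card_le_card_of_injOn
    (f := fun q : Finset (Fin r) × Equiv.Perm (Fin (r - 1)) => (⇑q.2) ∘ pairFun hr q.1)
    (s := ((Finset.univ : Finset (Fin r)).powersetCard 2) ×ˢ
      (Finset.univ : Finset (Equiv.Perm (Fin (r-1)))))
    (t := Finset.univ.filter fun f : Fin r → Fin (r - 1) => Function.Surjective f)
    ?_ ?_
  · calc r.choose 2 * Nat.factorial (r - 1)
        = (((Finset.univ : Finset (Fin r)).powersetCard 2) ×ˢ
            (Finset.univ : Finset (Equiv.Perm (Fin (r-1))))).card := by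
          rw [Finset.card_product, card_filter_lt_pairs, Finset.card_univ, Fintype.card_perm,
            Fintype.card_fin]
      _ ≤ _ := key
  · rintro ⟨s, σ⟩ hq
    simp only [Finset.mem_coe, Finset.mem_product, Finset.mem_powersetCard] at hq
    obtain ⟨⟨-, hs2⟩, -⟩ := hq
    rw [Finset.mem_coe, Finset.mem_filter]
    refine ⟨Finset.mem_univ _, ?_⟩
    have h1 : 1 < s.card := by omega
    simp only [pairFun, dif_pos h1]
    exact σ.surjective.comp (coll_surj _ _ _)
  · rintro ⟨s, σ⟩ hq ⟨s', σ'⟩ hq' heq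
    simp only [Finset.mem_coe, Finset.mem_product, Finset.mem_powersetCard] at hq hq'
    obtain ⟨⟨-, hs2⟩, -⟩ := hq
    obtain ⟨⟨-, hs2'⟩, -⟩ := hq'
    have h1 : 1 < s.card := by omega
    have h1' : 1 < s'.card := by omega
    obtain ⟨hne, hlt, hset⟩ := min'_max'_pair s hs2
    obtain ⟨hne', hlt', hset'⟩ := min'_max'_pair s' hs2'
    set a := s.min' hne
    set b := s.max' hne
    set a' := s'.min' hne'
    set b' := s'.max' hne'
    simp only [pairFun, dif_pos h1, dif_pos h1'] at heq
    have hab : (a : Fin r) ≠ b := Fin.ne_of_lt (Fin.lt_def.2 hlt)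
    have hfa : (⇑σ ∘ coll a b hlt) a = (⇑σ ∘ coll a b hlt) b := by
      simp only [Function.comp_apply, coll_pair]
    have hfa' : (⇑σ' ∘ coll a' b' hlt') a = (⇑σ' ∘ coll a' b' hlt') b := by
      rw [← heq]; exact hfa
    have hc' : coll a' b' hlt' a = coll a' b' hlt' b := σ'.injective hfa'
    have hcc := coll_eq_of a' b' hlt' hab hc'
    have hss' : s = s' := by
      rcases hcc with ⟨h1, h2⟩ | ⟨h1, h2⟩
      · rw [hset, hset', h1, h2]
      · rw [hset, hset', h1, h2, Finset.pair_comm]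
    have hσ : σ = σ' := by
      ext j
      obtain ⟨k, hk⟩ := coll_surj a b hlt j
      have e1 : (⇑σ ∘ coll a b hlt) k = σ j := by rw [Function.comp_apply, hk]
      have e2 : (⇑σ' ∘ coll a' b' hlt') k = σ' j := by
        have : coll a' b' hlt' k = j := by
          subst hss'
          exact hk
        rw [Function.comp_apply, this]
      rw [← e1, heq, e2]
    rw [Prod.ext_iff]
    exact ⟨hss', hσ⟩

lemma stirling_ge (r : ℕ) (hr : 2 ≤ r) : r.choose 2 ≤ stirlingSecond r (r - 1) := by
  rw [stirlingSecond, Nat.le_div_iff_mul_le (Nat.factorial_pos _)]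
  exact stirling_lower r hr

lemma card_surj_self (r : ℕ) :
    (Finset.univ.filter fun f : Fin r → Fin r => Function.Surjective f).card
      = Nat.factorial r := by
  classical
  have h1 : (Finset.univ.filter fun f : Fin r → Fin r => Function.Surjective f).card
      = Fintype.card {f : Fin r → Fin r // Function.Surjective f} := by
    rw [Fintype.card_subtype]
  rw [h1]
  have e : {f : Fin r → Fin r // Function.Surjective f} ≃ Equiv.Perm (Fin r) :=
    { toFun := fun f => Equiv.ofBijective f.1
        ((Fintype.bijective_iff_surjective_and_card f.1).2 ⟨f.2, rfl⟩)
      invFun := fun σ => ⟨σ, σ.surjective⟩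
      left_inv := fun f => by ext x; rfl
      right_inv := fun σ => by ext x; rfl }
  rw [Fintype.card_congr e, Fintype.card_perm, Fintype.card_fin]

lemma stirling_self (r : ℕ) : stirlingSecond r r = 1 := by
  rw [stirlingSecond, card_surj_self, Nat.div_self (Nat.factorial_pos r)]

end Stirling

section Averaging

lemma card_cond_count {r k : ℕ} (e : Finset V) (he : e.card = r) :
    (Finset.univ.filter fun f : V → Fin k => ∀ j : Fin k, ∃ v ∈ e, f v = j).card
      = (Finset.univ.filter fun f : Fin r → Fin k => Function.Surjective f).card
        * k ^ (Fintype.card V - r) := by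
  classical
  rw [← Fintype.card_subtype, ← Fintype.card_subtype]
  have ee : ({x : V // x ∈ e}) ≃ Fin r :=
    Fintype.equivFinOfCardEq (by rw [Fintype.card_coe, he])
  let E : (V → Fin k) ≃ ({x : V // x ∈ e} → Fin k) × ({x : V // x ∉ e} → Fin k) :=
    (Equiv.arrowCongr (Equiv.sumCompl (fun x => x ∈ e)).symm (Equiv.refl _)).trans
      (Equiv.sumArrowEquivProdArrow _ _ _)
  have hE : ∀ f : V → Fin k, ∀ x : {x : V // x ∈ e}, (E f).1 x = f x.1 := by
    intro f x; rfl
  have key : ∀ f : V → Fin k,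
      (∀ j : Fin k, ∃ v ∈ e, f v = j) ↔ Function.Surjective ((E f).1) := by
    intro f
    constructor
    · intro h j
      obtain ⟨v, hv, hfv⟩ := h j
      exact ⟨⟨v, hv⟩, by rw [hE]; exact hfv⟩
    · intro h j
      obtain ⟨x, hx⟩ := h j
      exact ⟨x.1, x.2, by rw [← hE f x]; exact hx⟩
  have E2 : {f : V → Fin k // ∀ j : Fin k, ∃ v ∈ e, f v = j}
      ≃ {p : ({x : V // x ∈ e} → Fin k) × ({x : V // x ∉ e} → Fin k) //
          Function.Surjective p.1} :=
    (Equiv.subtypeEquiv E (by intro f; rw [key f]))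
  rw [Fintype.card_congr E2]
  have E3 : {p : ({x : V // x ∈ e} → Fin k) × ({x : V // x ∉ e} → Fin k) //
          Function.Surjective p.1}
      ≃ {g : {x : V // x ∈ e} → Fin k // Function.Surjective g} × ({x : V // x ∉ e} → Fin k) :=
    { toFun := fun p => ⟨⟨p.1.1, p.2⟩, p.1.2⟩
      invFun := fun q => ⟨(q.1.1, q.2), q.1.2⟩
      left_inv := fun p => rfl
      right_inv := fun q => rfl }
  rw [Fintype.card_congr E3, Fintype.card_prod]
  congr 1
  · have E4 : {g : {x : V // x ∈ e} → Fin k // Function.Surjective g}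
        ≃ {h : Fin r → Fin k // Function.Surjective h} :=
      Equiv.subtypeEquiv (Equiv.arrowCongr ee (Equiv.refl _)) (by
        intro g
        constructor
        · intro hg j
          obtain ⟨x, hx⟩ := hg j
          exact ⟨ee x, by simp [Equiv.arrowCongr]; exact hx⟩
        · intro hg j
          obtain ⟨i, hi⟩ := hg j
          refine ⟨ee.symm i, ?_⟩
          simpa [Equiv.arrowCongr] using hi)
    rw [Fintype.card_congr E4]
  · rw [Fintype.card_fun, Fintype.card_fin, Fintype.card_subtype_compl, Fintype.card_coe, he]

lemma avg_le (r k : ℕ) (hk : 0 < k) (w : Finset V → ℕ)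
    (hunif : ∀ e, w e ≠ 0 → e.card = r) :
    ((Finset.univ.filter fun f : Fin r → Fin k => Function.Surjective f).card : ℝ) * totalEdges w
      ≤ (k : ℝ) ^ r * mcut w k := by
  classical
  set n := Fintype.card V
  set Sk := (Finset.univ.filter fun f : Fin r → Fin k => Function.Surjective f).card with hSk
  have hsum : ∑ f : V → Fin k, cutCount w f = (Sk * k ^ (n - r) : ℕ) * totalEdges w := by
    simp only [cutCount]
    rw [Finset.sum_comm]
    rw [totalEdges, Finset.mul_sum]
    refine Finset.sum_congr rfl fun e _ => ?_
    rw [← Finset.sum_filter, Finset.sum_const, nsmul_eq_mul]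
    by_cases hwe : w e = 0
    · simp [hwe]
    · rw [card_cond_count e (hunif e hwe)]
  have hle : ∑ f : V → Fin k, cutCount w f ≤ (k ^ n : ℕ) * mcut w k := by
    calc ∑ f : V → Fin k, cutCount w f ≤ ∑ _f : V → Fin k, mcut w k :=
          Finset.sum_le_sum fun f _ => cutCount_le_mcut w f
      _ = (k ^ n : ℕ) * mcut w k := by
          rw [Finset.sum_const, nsmul_eq_mul, Finset.card_univ, Fintype.card_fun,
            Fintype.card_fin]
  have h2 : (Sk * k ^ (n - r) : ℕ) * totalEdges w
      ≤ (k ^ (n - r) : ℕ) * ((k:ℝ) ^ r * mcut w k) := by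
    calc ((Sk * k ^ (n - r) : ℕ) : ℝ) * totalEdges w ≤ (k ^ n : ℕ) * mcut w k := hsum ▸ hle
      _ ≤ (k ^ (n - r) : ℕ) * ((k:ℝ) ^ r * mcut w k) := by
          rw [← mul_assoc]
          refine mul_le_mul_of_nonneg_right ?_ (mcut_nonneg hk w)
          have : (k:ℝ) ^ n ≤ (k:ℝ) ^ (n - r + r) := by
            refine pow_le_pow_right₀ ?_ (by omega)
            exact_mod_cast hk
          push_cast
          rw [← pow_add]
          exact this
  have hpos : (0:ℝ) < (k ^ (n - r) : ℕ) := by positivity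
  refine le_of_mul_le_mul_left ?_ hpos
  calc (k ^ (n-r) : ℕ) * (((Sk:ℕ):ℝ) * totalEdges w)
      = ((Sk * k ^ (n - r) : ℕ) : ℝ) * totalEdges w := by push_cast; ring
    _ ≤ (k ^ (n - r) : ℕ) * ((k:ℝ) ^ r * mcut w k) := h2

lemma pow_ratio_le_four (r : ℕ) (hr : 2 ≤ r) :
    (r : ℝ) ^ (r - 1) ≤ 4 * ((r : ℝ) - 1) ^ (r - 1) := by
  set m := r - 1 with hm
  have hm1 : 1 ≤ m := by omega
  have hx : (0:ℝ) < (m:ℝ) := by exact_mod_cast hm1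
  have hr' : (r:ℝ) = (m:ℝ) + 1 := by
    have : r = m + 1 := by omega
    rw [this]; push_cast; ring
  have hrm : (r:ℝ) - 1 = (m:ℝ) := by rw [hr']; ring
  rw [hrm, hr']
  have key : (m:ℝ) + 1 ≤ Real.exp (1/(m:ℝ)) * m := by
    have h1 : 1/(m:ℝ) + 1 ≤ Real.exp (1/(m:ℝ)) := Real.add_one_le_exp _
    calc (m:ℝ) + 1 = (1/(m:ℝ) + 1) * m := by field_simp; ring
      _ ≤ Real.exp (1/(m:ℝ)) * m := mul_le_mul_of_nonneg_right h1 (le_of_lt hx)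
  calc ((m:ℝ) + 1) ^ m ≤ (Real.exp (1/(m:ℝ)) * m) ^ m := pow_le_pow_left₀ (by positivity) key m
    _ = Real.exp (1/(m:ℝ)) ^ m * (m:ℝ) ^ m := mul_pow _ _ _
    _ ≤ 4 * (m:ℝ) ^ m := by
        refine mul_le_mul_of_nonneg_right ?_ (by positivity)
        have h3 : Real.exp (1/(m:ℝ)) ^ m = Real.exp ((m:ℝ) * (1/(m:ℝ))) := by
          rw [← Real.exp_nat_mul]
        rw [h3]
        have hmm : (m:ℝ) * (1/(m:ℝ)) = 1 := by field_simp
        rw [hmm]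
        calc Real.exp 1 ≤ 2.7182818286 := le_of_lt Real.exp_one_lt_d9
          _ ≤ 4 := by norm_num

end Averaging

section EdgeProb

lemma edge_cut_of {r : ℕ} (hr : 2 ≤ r) (g : V → Fin (r - 1)) (T e : Finset V)
    (u v : V) (hTe : T ∩ e = {u}) (hv : v ∈ e) (hvu : v ≠ u) (hg : g v = g u)
    (hcut : ∀ j : Fin (r - 1), ∃ x ∈ e, g x = j) (h1 : r - 1 < r) (h2 : r - 1 ≤ r) :
    ∀ j : Fin r, ∃ x ∈ e,
      (if x ∈ T then (⟨r - 1, h1⟩ : Fin r) else Fin.castLE h2 (g x)) = j := by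
  have hu : u ∈ T ∩ e := hTe ▸ Finset.mem_singleton_self u
  have huT : u ∈ T := (Finset.mem_inter.1 hu).1
  have hue : u ∈ e := (Finset.mem_inter.1 hu).2
  have hvT : v ∉ T := fun hvT =>
    hvu (Finset.mem_singleton.1 (hTe ▸ Finset.mem_inter.2 ⟨hvT, hv⟩))
  intro j
  by_cases hj : j.val = r - 1
  · exact ⟨u, hue, by rw [if_pos huT]; exact Fin.ext (by simp [hj])⟩
  · have hj' : j.val < r - 1 := by have := j.isLt; omega
    obtain ⟨x, hx, hgx⟩ := hcut ⟨j.val, hj'⟩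
    by_cases hxT : x ∈ T
    · have hxu : x = u := Finset.mem_singleton.1 (hTe ▸ Finset.mem_inter.2 ⟨hxT, hx⟩)
      refine ⟨v, hv, ?_⟩
      rw [if_neg hvT]
      have : g v = ⟨j.val, hj'⟩ := by rw [hg, ← hxu, hgx]
      exact Fin.ext (by simp [this])
    · refine ⟨x, hx, ?_⟩
      rw [if_neg hxT]
      exact Fin.ext (by simp [hgx])

lemma edge_prob {r : ℕ} (hr : 2 ≤ r) (w : Finset V → ℕ) (g : V → Fin (r - 1)) (e : Finset V)
    (hwe : w e ≠ 0 → e.card = r) (h1 : r - 1 < r) (h2 : r - 1 ≤ r) :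
    (2 * (1 / (r : ℝ)) * (((r : ℝ) - 1) / r) ^ (r - 1)) *
        (if ∀ j : Fin (r - 1), ∃ x ∈ e, g x = j then (w e : ℝ) else 0)
      ≤ ∑ T : Finset V,
          ((1 / (r : ℝ)) ^ T.card * (((r : ℝ) - 1) / r) ^ (Fintype.card V - T.card)) *
            (if ∀ j : Fin r, ∃ x ∈ e,
                (if x ∈ T then (⟨r - 1, h1⟩ : Fin r) else Fin.castLE h2 (g x)) = j
              then (w e : ℝ) else 0) := by
  have hr0 : (0:ℝ) < (r:ℝ) := by exact_mod_cast (by omega : 0 < r)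
  have hw1 : (0:ℝ) ≤ 1 / (r:ℝ) := by positivity
  have hw2 : (0:ℝ) ≤ ((r:ℝ) - 1) / r := by
    apply div_nonneg _ (le_of_lt hr0)
    have : (2:ℝ) ≤ (r:ℝ) := by exact_mod_cast hr
    linarith
  have hterm : ∀ T : Finset V, (0:ℝ) ≤
      ((1 / (r : ℝ)) ^ T.card * (((r : ℝ) - 1) / r) ^ (Fintype.card V - T.card)) *
        (if ∀ j : Fin r, ∃ x ∈ e,
            (if x ∈ T then (⟨r - 1, h1⟩ : Fin r) else Fin.castLE h2 (g x)) = j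
          then (w e : ℝ) else 0) := by
    intro T
    apply mul_nonneg (mul_nonneg (pow_nonneg hw1 _) (pow_nonneg hw2 _))
    split <;> positivity
  by_cases hcond : ∀ j : Fin (r - 1), ∃ x ∈ e, g x = j
  · by_cases hwz : w e = 0
    · have hLHS : (2 * (1 / (r : ℝ)) * (((r : ℝ) - 1) / r) ^ (r - 1)) *
          (if ∀ j : Fin (r - 1), ∃ x ∈ e, g x = j then (w e : ℝ) else 0) = 0 := by
        rw [if_pos hcond, hwz]; simp
      rw [hLHS]
      exact Finset.sum_nonneg fun T _ => hterm T
    · have he : e.card = r := hwe hwz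
      obtain ⟨u, hu, v, hv, huv, hguv⟩ :=
        Finset.exists_ne_map_eq_of_card_lt_of_maps_to
          (s := e) (t := (Finset.univ : Finset (Fin (r-1))))
          (by rw [he, Finset.card_univ, Fintype.card_fin]; omega)
          (fun x _ => Finset.mem_univ (g x))
      set W : Finset V → ℝ := fun T =>
        ((1 / (r : ℝ)) ^ T.card * (((r : ℝ) - 1) / r) ^ (Fintype.card V - T.card)) *
          (if ∀ j : Fin r, ∃ x ∈ e,
              (if x ∈ T then (⟨r - 1, h1⟩ : Fin r) else Fin.castLE h2 (g x)) = j
            then (w e : ℝ) else 0) with hW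
      have hsubset : (Finset.univ.filter (fun T : Finset V => T ∩ e = {u})) ∪
          (Finset.univ.filter (fun T : Finset V => T ∩ e = {v})) ⊆ Finset.univ :=
        Finset.subset_univ _
      have hdisj : Disjoint (Finset.univ.filter (fun T : Finset V => T ∩ e = {u}))
          (Finset.univ.filter (fun T : Finset V => T ∩ e = {v})) := by
        rw [Finset.disjoint_left]
        intro T hT1 hT2
        rw [Finset.mem_filter] at hT1 hT2
        have : ({u} : Finset V) = {v} := by rw [← hT1.2, hT2.2]
        exact huv (Finset.singleton_inj.1 this)
      have hmain : ∑ T : Finset V, W T ≥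
          ∑ T ∈ (Finset.univ.filter (fun T : Finset V => T ∩ e = {u})) ∪
            (Finset.univ.filter (fun T : Finset V => T ∩ e = {v})), W T :=
        Finset.sum_le_sum_of_subset_of_nonneg hsubset (fun T _ _ => hterm T)
      rw [Finset.sum_union hdisj] at hmain
      have hval : ∀ (a b : V), a ∈ e → b ∈ e → b ≠ a → g b = g a →
          ∑ T ∈ Finset.univ.filter (fun T : Finset V => T ∩ e = {a}), W T
            = (1 / (r:ℝ)) * (((r:ℝ) - 1) / r) ^ (r - 1) * (w e : ℝ) := by
        intro a b ha hb hba hgba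
        have hWeq : ∀ T ∈ Finset.univ.filter (fun T : Finset V => T ∩ e = {a}),
            W T = ((1 / (r : ℝ)) ^ T.card * (((r : ℝ) - 1) / r) ^ (Fintype.card V - T.card))
              * (w e : ℝ) := by
          intro T hT
          rw [Finset.mem_filter] at hT
          rw [hW]
          simp only
          rw [if_pos (edge_cut_of hr g T e a b hT.2 hb hba hgba hcond h1 h2)]
        rw [Finset.sum_congr rfl hWeq, ← Finset.sum_mul,
          sum_weight_inter _ _ (by field_simp; ring) e {a} (Finset.singleton_subset_iff.2 ha),
          Finset.card_singleton, he, pow_one]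
      rw [hval u v hu hv huv.symm hguv.symm, hval v u hv hu huv hguv] at hmain
      rw [if_pos hcond]
      calc (2 * (1 / (r : ℝ)) * (((r : ℝ) - 1) / r) ^ (r - 1)) * (w e : ℝ)
          = (1 / (r:ℝ)) * (((r:ℝ) - 1) / r) ^ (r - 1) * (w e : ℝ)
            + (1 / (r:ℝ)) * (((r:ℝ) - 1) / r) ^ (r - 1) * (w e : ℝ) := by ring
        _ ≤ ∑ T : Finset V, W T := hmain
  · rw [if_neg hcond]
    simp only [mul_zero]
    exact Finset.sum_nonneg fun T _ => hterm T

end EdgeProb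

/-- For an `r`-uniform multihypergraph `H` (`r ≥ 2`): `2r·surp_r(H) ≥ surp_{r−1}(H)`.
More precisely, if `g` is an `(r−1)`-partition achieving `mc_{r−1}(H)`, then moving each
vertex independently with probability `1/r` to a new `r`-th part yields an `r`-partition
whose expected number of cut edges is at least `(r!/r^r)·e(H) + (1/(2r))·surp_{r−1}(H)`. -/
theorem stmt5 (r : ℕ) (hr : 2 ≤ r) (w : Finset V → ℕ)
    (hunif : ∀ e, w e ≠ 0 → e.card = r) :
    2 * r * surpk w r r ≥ surpk w r (r - 1) ∧
    ∀ g : V → Fin (r - 1), cutCount w g = mcut w (r - 1) →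
      ∑ T : Finset V,
          ((1 / (r : ℝ)) ^ T.card * (((r : ℝ) - 1) / r) ^ (Fintype.card V - T.card)) *
            cutCount w
              (fun v => if v ∈ T then (⟨r - 1, by omega⟩ : Fin r)
                else Fin.castLE (by omega) (g v))
        ≥ (Nat.factorial r : ℝ) / r ^ r * totalEdges w
            + 1 / (2 * r) * surpk w r (r - 1) := by
  classical
  have hr1 : 0 < r - 1 := by omega
  have h1 : r - 1 < r := by omega
  have h2 : r - 1 ≤ r := by omega
  have hR0 : (0:ℝ) < (r:ℝ) := by exact_mod_cast (by omega : 0 < r)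
  have hR1 : (1:ℝ) < (r:ℝ) := by exact_mod_cast (by omega : 1 < r)
  have hcast : (((r - 1 : ℕ)):ℝ) = (r:ℝ) - 1 := by
    rw [Nat.cast_sub (by omega)]; simp
  have hm0 : 0 ≤ totalEdges w := totalEdges_nonneg w
  set p : ℝ := 2 * (1/(r:ℝ)) * (((r:ℝ) - 1)/r) ^ (r - 1) with hpdef
  set St := stirlingSecond r (r - 1) with hStdef
  set β : ℝ := ((St : ℝ) * (Nat.factorial (r-1) : ℝ)) / (((r - 1 : ℕ)):ℝ) ^ r with hβdef
  -- averaging bound : β * m ≤ mcut w (r-1)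
  have hβc : β * totalEdges w ≤ mcut w (r - 1) := by
    have havg := avg_le r (r-1) hr1 w hunif
    have hSt : ((St * Nat.factorial (r-1) : ℕ) : ℝ) ≤
        ((Finset.univ.filter fun f : Fin r → Fin (r-1) => Function.Surjective f).card : ℝ) := by
      exact_mod_cast Nat.div_mul_le_self _ _
    have hpow : (0:ℝ) < (((r - 1 : ℕ)):ℝ) ^ r := by
      have : (0:ℝ) < (((r - 1 : ℕ)):ℝ) := by exact_mod_cast hr1
      positivity
    rw [hβdef, div_mul_eq_mul_div, div_le_iff₀ hpow]
    calc (St:ℝ) * (Nat.factorial (r-1) : ℝ) * totalEdges w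
        ≤ ((Finset.univ.filter fun f : Fin r → Fin (r-1) =>
            Function.Surjective f).card : ℝ) * totalEdges w := by
          refine mul_le_mul_of_nonneg_right ?_ hm0
          exact_mod_cast hSt
      _ ≤ (((r - 1 : ℕ)):ℝ) ^ r * mcut w (r - 1) := havg
      _ = mcut w (r - 1) * (((r - 1 : ℕ)):ℝ) ^ r := by ring
  -- key product bound : r!/r^r ≤ p * β
  have hpb : (Nat.factorial r : ℝ) / (r:ℝ) ^ r ≤ p * β := by
    have hnat : (r - 1) * Nat.factorial r ≤ 2 * St * Nat.factorial (r - 1) := by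
      have hch := stirling_ge r hr
      have hchoose : r.choose 2 = r * (r - 1) / 2 := Nat.choose_two_right r
      have hev : Even ((r - 1) * (r - 1 + 1)) := Nat.even_mul_succ_self (r - 1)
      have hev' : Even (r * (r - 1)) := by
        rw [show r * (r - 1) = (r - 1) * (r - 1 + 1) by
          rw [Nat.sub_add_cancel (by omega)]; ring]
        exact hev
      have h2c : 2 * r.choose 2 = r * (r - 1) := by
        rw [hchoose, Nat.mul_div_cancel' hev'.two_dvd]
      calc (r - 1) * Nat.factorial r = (r - 1) * (r * Nat.factorial (r - 1)) := by
            rw [Nat.mul_factorial_pred (by omega)]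
        _ = 2 * r.choose 2 * Nat.factorial (r - 1) := by rw [h2c]; ring
        _ ≤ 2 * St * Nat.factorial (r - 1) :=
            Nat.mul_le_mul_right _ (Nat.mul_le_mul_left 2 hch)
    have hreal : ((r:ℝ) - 1) * (Nat.factorial r : ℝ) ≤ 2 * (St:ℝ) * (Nat.factorial (r-1) : ℝ) := by
      have := hnat
      have h' : (((r - 1) * Nat.factorial r : ℕ) : ℝ) ≤
          ((2 * St * Nat.factorial (r - 1) : ℕ) : ℝ) := by exact_mod_cast this
      push_cast at h'
      rw [hcast] at h'
      convert h' using 2 <;> push_cast <;> ring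
    have hRm1 : (0:ℝ) < (r:ℝ) - 1 := by linarith
    have hpβ : p * β = (2 * (St:ℝ) * (Nat.factorial (r-1) : ℝ)) / ((r:ℝ) ^ r * ((r:ℝ) - 1)) := by
      rw [hpdef, hβdef, hcast, div_pow]
      have hrr : (r:ℝ) ^ r = (r:ℝ) ^ (r-1) * (r:ℝ) := by
        rw [← pow_succ, show r - 1 + 1 = r by omega]
      have hrr1 : ((r:ℝ) - 1) ^ r = ((r:ℝ) - 1) ^ (r-1) * ((r:ℝ) - 1) := by
        rw [← pow_succ, show r - 1 + 1 = r by omega]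
      rw [hrr, hrr1]
      have hpr : ((r:ℝ)) ^ (r-1) ≠ 0 := by positivity
      have hpr1 : ((r:ℝ) - 1) ^ (r-1) ≠ 0 := by positivity
      field_simp
    rw [hpβ, div_le_div_iff₀ (by positivity) (by positivity)]
    calc (Nat.factorial r : ℝ) * ((r:ℝ) ^ r * ((r:ℝ) - 1))
        = (((r:ℝ) - 1) * (Nat.factorial r : ℝ)) * (r:ℝ) ^ r := by ring
      _ ≤ (2 * (St:ℝ) * (Nat.factorial (r-1) : ℝ)) * (r:ℝ) ^ r := by
          refine mul_le_mul_of_nonneg_right hreal (by positivity)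
  -- p ≥ 1/(2r)
  have hp_half : 1 / (2 * (r:ℝ)) ≤ p := by
    have h4 := pow_ratio_le_four r hr
    have hb : (0:ℝ) < (r:ℝ) ^ (r-1) := by positivity
    have hpeq : p = (2 * ((r:ℝ) - 1) ^ (r-1)) / ((r:ℝ) * (r:ℝ) ^ (r-1)) := by
      rw [hpdef, div_pow]
      field_simp
    rw [hpeq, div_le_div_iff₀ (by positivity) (by positivity)]
    nlinarith [hR0, hb]
  -- weights
  have hw2 : (0:ℝ) ≤ ((r:ℝ) - 1) / r := by
    apply div_nonneg _ (le_of_lt hR0)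
    linarith
  have hwnonneg : ∀ T : Finset V,
      (0:ℝ) ≤ (1 / (r : ℝ)) ^ T.card * (((r : ℝ) - 1) / r) ^ (Fintype.card V - T.card) :=
    fun T => mul_nonneg (pow_nonneg (by positivity) _) (pow_nonneg hw2 _)
  -- the main (second) part
  have main2 : ∀ g : V → Fin (r - 1), cutCount w g = mcut w (r - 1) →
      ∑ T : Finset V,
          ((1 / (r : ℝ)) ^ T.card * (((r : ℝ) - 1) / r) ^ (Fintype.card V - T.card)) *
            cutCount w
              (fun v => if v ∈ T then (⟨r - 1, h1⟩ : Fin r)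
                else Fin.castLE h2 (g v))
        ≥ (Nat.factorial r : ℝ) / r ^ r * totalEdges w
            + 1 / (2 * r) * surpk w r (r - 1) := by
    intro g hg
    have hexp : p * cutCount w g ≤
        ∑ T : Finset V,
          ((1 / (r : ℝ)) ^ T.card * (((r : ℝ) - 1) / r) ^ (Fintype.card V - T.card)) *
            cutCount w
              (fun v => if v ∈ T then (⟨r - 1, h1⟩ : Fin r)
                else Fin.castLE h2 (g v)) := by
      calc p * cutCount w g
          = ∑ e : Finset V, p * (if ∀ j : Fin (r-1), ∃ v ∈ e, g v = j then (w e:ℝ) else 0) := by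
            rw [cutCount, Finset.mul_sum]
        _ ≤ ∑ e : Finset V, ∑ T : Finset V,
            ((1 / (r : ℝ)) ^ T.card * (((r : ℝ) - 1) / r) ^ (Fintype.card V - T.card)) *
              (if ∀ j : Fin r, ∃ x ∈ e,
                  (if x ∈ T then (⟨r - 1, h1⟩ : Fin r) else Fin.castLE h2 (g x)) = j
                then (w e : ℝ) else 0) :=
            Finset.sum_le_sum fun e _ => edge_prob hr w g e (hunif e) h1 h2
        _ = ∑ T : Finset V, ∑ e : Finset V,
            ((1 / (r : ℝ)) ^ T.card * (((r : ℝ) - 1) / r) ^ (Fintype.card V - T.card)) *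
              (if ∀ j : Fin r, ∃ x ∈ e,
                  (if x ∈ T then (⟨r - 1, h1⟩ : Fin r) else Fin.castLE h2 (g x)) = j
                then (w e : ℝ) else 0) := Finset.sum_comm
        _ = _ := by
            refine Finset.sum_congr rfl fun T _ => ?_
            rw [cutCount, Finset.mul_sum]
    refine le_trans ?_ hexp
    rw [hg] at hexp ⊢
    rw [surpk]
    have hc := hβc
    set c := mcut w (r - 1)
    set m := totalEdges w
    have key1 : 0 ≤ (p - 1/(2*(r:ℝ))) * (c - β * m) :=
      mul_nonneg (by linarith) (by linarith)
    have key2 : (Nat.factorial r : ℝ) / (r:ℝ) ^ r * m ≤ p * β * m :=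
      mul_le_mul_of_nonneg_right hpb hm0
    have hfin : (Nat.factorial r : ℝ) / (r:ℝ) ^ r * m
        + 1 / (2 * (r:ℝ)) * (c - ((St:ℝ) * (Nat.factorial (r-1) : ℝ)) /
            (((r - 1 : ℕ)):ℝ) ^ r * m) ≤ p * c := by
      have hβm : ((St:ℝ) * (Nat.factorial (r-1) : ℝ)) / (((r - 1 : ℕ)):ℝ) ^ r * m = β * m := by
        rw [hβdef]
      rw [hβm]
      nlinarith [key1, key2]
    calc (Nat.factorial r : ℝ) / (r:ℝ) ^ r * m
          + 1 / (2 * (r:ℝ)) * (c - (stirlingSecond r (r-1) * Nat.factorial (r-1) : ℝ) /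
              ((r - 1 : ℕ):ℝ) ^ r * m)
        = (Nat.factorial r : ℝ) / (r:ℝ) ^ r * m
          + 1 / (2 * (r:ℝ)) * (c - ((St:ℝ) * (Nat.factorial (r-1) : ℝ)) /
              (((r - 1 : ℕ)):ℝ) ^ r * m) := by
          push_cast
          ring
      _ ≤ p * c := hfin
  refine ⟨?_, fun g hg => main2 g hg⟩
  -- part 1
  obtain ⟨g, hg⟩ := exists_mcut hr1 w
  have hmain := main2 g hg
  have hle : ∑ T : Finset V,
      ((1 / (r : ℝ)) ^ T.card * (((r : ℝ) - 1) / r) ^ (Fintype.card V - T.card)) *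
        cutCount w
          (fun v => if v ∈ T then (⟨r - 1, h1⟩ : Fin r)
            else Fin.castLE h2 (g v)) ≤ mcut w r := by
    calc ∑ T : Finset V,
        ((1 / (r : ℝ)) ^ T.card * (((r : ℝ) - 1) / r) ^ (Fintype.card V - T.card)) *
          cutCount w
            (fun v => if v ∈ T then (⟨r - 1, h1⟩ : Fin r)
              else Fin.castLE h2 (g v))
        ≤ ∑ T : Finset V,
          ((1 / (r : ℝ)) ^ T.card * (((r : ℝ) - 1) / r) ^ (Fintype.card V - T.card)) *
            mcut w r :=
          Finset.sum_le_sum fun T _ =>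
            mul_le_mul_of_nonneg_left (cutCount_le_mcut w _) (hwnonneg T)
      _ = (∑ T : Finset V,
          (1 / (r : ℝ)) ^ T.card * (((r : ℝ) - 1) / r) ^ (Fintype.card V - T.card)) *
            mcut w r := by rw [Finset.sum_mul]
      _ = mcut w r := by rw [weight_sum_one r hr, one_mul]
  have hM : (Nat.factorial r : ℝ) / (r:ℝ) ^ r * totalEdges w
      + 1 / (2 * (r:ℝ)) * surpk w r (r - 1) ≤ mcut w r := le_trans hmain hle
  have hsr : surpk w r r = mcut w r - (Nat.factorial r : ℝ) / (r:ℝ) ^ r * totalEdges w := by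
    rw [surpk, stirling_self]
    push_cast
    ring
  have h2R : 2 * (r:ℝ) * (1 / (2 * (r:ℝ))) = 1 := by field_simp
  rw [ge_iff_le, hsr]
  have h3 : 1 / (2 * (r:ℝ)) * surpk w r (r - 1)
      ≤ mcut w r - (Nat.factorial r : ℝ) / (r:ℝ) ^ r * totalEdges w := by linarith
  calc surpk w r (r - 1)
      = 2 * (r:ℝ) * (1 / (2 * (r:ℝ)) * surpk w r (r - 1)) := by
        rw [← mul_assoc, h2R, one_mul]
    _ ≤ 2 * (r:ℝ) * (mcut w r - (Nat.factorial r : ℝ) / (r:ℝ) ^ r * totalEdges w) :=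
        mul_le_mul_of_nonneg_left h3 (by linarith)
end

section
/- For any symmetric matrices A, B ∈ ℝ^{n×n} and indices i, j with i + j − 1 ≤ n, λ_{i+j−1}(A+B) ≤ λ_i(A) + λ_j(B), where λ_k(M) denotes the k-th largest eigenvalue of M. -/
open Submodule Module Finset

noncomputable section WeylAux

variable {n : ℕ}

lemma weyl_inner_eq_zero {E : Type*} [NormedAddCommGroup E] [InnerProductSpace ℝ E]
    {ι : Type*} {u : ι → E} (hu : Orthonormal ℝ u) {S : Set ι} {k : ι} (hk : k ∉ S)
    {x : E} (hx : x ∈ span ℝ (u '' S)) : (inner ℝ (u k) x : ℝ) = 0 := by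
  induction hx using Submodule.span_induction with
  | mem y hy =>
    obtain ⟨m, hm, rfl⟩ := hy
    exact hu.2 (fun h : k = m => hk (h ▸ hm))
  | zero => simp
  | add y z _ _ hy hz => simp [inner_add_right, hy, hz]
  | smul c y _ hy => simp [inner_smul_right, hy]

lemma weyl_finrank_span {u : Fin n → EuclideanSpace ℝ (Fin n)} (hu : Orthonormal ℝ u)
    (S : Finset (Fin n)) : finrank ℝ (span ℝ (u '' ↑S)) = S.card := by
  have li : LinearIndependent ℝ (fun k : ↥S => u k) :=
    hu.linearIndependent.comp _ Subtype.val_injective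
  rw [Set.image_eq_range]
  exact (finrank_span_eq_card li).trans (Fintype.card_coe S)

lemma weyl_eig_apply {A : Matrix (Fin n) (Fin n) ℝ} (hA : A.IsHermitian) (k : Fin n) :
    Matrix.toEuclideanLin A (hA.eigenvectorBasis k) = hA.eigenvalues k • hA.eigenvectorBasis k :=
  congrArg (WithLp.equiv 2 (Fin n → ℝ)).symm (hA.mulVec_eigenvectorBasis k)

lemma weyl_quad_repr {A : Matrix (Fin n) (Fin n) ℝ} (hA : A.IsHermitian)
    (x : EuclideanSpace ℝ (Fin n)) :
    (inner ℝ x (Matrix.toEuclideanLin A x) : ℝ) =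
      ∑ m, hA.eigenvalues m * (inner ℝ (hA.eigenvectorBasis m) x : ℝ) ^ 2 := by
  set u := hA.eigenvectorBasis with hu
  have h1 : Matrix.toEuclideanLin A x = ∑ m, u.repr x m • (hA.eigenvalues m • u m) := by
    conv_lhs => rw [← u.sum_repr x]
    rw [map_sum]
    exact Finset.sum_congr rfl fun m _ => by rw [map_smul, weyl_eig_apply]
  rw [h1, inner_sum]
  refine Finset.sum_congr rfl fun m _ => ?_
  rw [real_inner_smul_right, real_inner_smul_right, u.repr_apply_apply, real_inner_comm]
  ring

lemma weyl_norm_sq_repr {A : Matrix (Fin n) (Fin n) ℝ} (hA : A.IsHermitian)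
    (x : EuclideanSpace ℝ (Fin n)) :
    ‖x‖ ^ 2 = ∑ m, (inner ℝ (hA.eigenvectorBasis m) x : ℝ) ^ 2 := by
  set u := hA.eigenvectorBasis with hu
  rw [← real_inner_self_eq_norm_sq]
  nth_rewrite 2 [← u.sum_repr x]
  rw [inner_sum]
  refine Finset.sum_congr rfl fun m _ => ?_
  rw [real_inner_smul_right, u.repr_apply_apply, real_inner_comm]
  ring

lemma weyl_quad_le {A : Matrix (Fin n) (Fin n) ℝ} (hA : A.IsHermitian)
    (S : Finset (Fin n)) (c : ℝ) (hc : ∀ k ∈ S, hA.eigenvalues k ≤ c)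
    {x : EuclideanSpace ℝ (Fin n)} (hx : x ∈ span ℝ (⇑hA.eigenvectorBasis '' ↑S)) :
    (inner ℝ x (Matrix.toEuclideanLin A x) : ℝ) ≤ c * ‖x‖ ^ 2 := by
  rw [weyl_quad_repr hA x, weyl_norm_sq_repr hA x, Finset.mul_sum]
  refine Finset.sum_le_sum fun m _ => ?_
  by_cases hm : m ∈ S
  · exact mul_le_mul_of_nonneg_right (hc m hm) (sq_nonneg _)
  · rw [weyl_inner_eq_zero hA.eigenvectorBasis.orthonormal hm hx]
    simp

lemma weyl_quad_ge {A : Matrix (Fin n) (Fin n) ℝ} (hA : A.IsHermitian)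
    (S : Finset (Fin n)) (c : ℝ) (hc : ∀ k ∈ S, c ≤ hA.eigenvalues k)
    {x : EuclideanSpace ℝ (Fin n)} (hx : x ∈ span ℝ (⇑hA.eigenvectorBasis '' ↑S)) :
    c * ‖x‖ ^ 2 ≤ (inner ℝ x (Matrix.toEuclideanLin A x) : ℝ) := by
  rw [weyl_quad_repr hA x, weyl_norm_sq_repr hA x, Finset.mul_sum]
  refine Finset.sum_le_sum fun m _ => ?_
  by_cases hm : m ∈ S
  · exact mul_le_mul_of_nonneg_right (hc m hm) (sq_nonneg _)
  · rw [weyl_inner_eq_zero hA.eigenvectorBasis.orthonormal hm hx]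
    simp


/-- The `i`-th largest eigenvalue (0-indexed) of a real symmetric matrix:
the eigenvalues sorted in decreasing order. -/
noncomputable def eigDesc {n : ℕ} {A : Matrix (Fin n) (Fin n) ℝ}
    (hA : A.IsHermitian) : Fin n → ℝ :=
  fun i => (hA.eigenvalues ∘ Tuple.sort hA.eigenvalues) i.rev


lemma weyl_abstract {n : ℕ} {A B : Matrix (Fin n) (Fin n) ℝ}
    (hA : A.IsHermitian) (hB : B.IsHermitian) (hC : (A + B).IsHermitian)
    (a b c : ℝ) (SA SB SC : Finset (Fin n))
    (hcard : 2 * n < SA.card + SB.card + SC.card)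
    (hcA : ∀ k ∈ SA, hA.eigenvalues k ≤ a)
    (hcB : ∀ k ∈ SB, hB.eigenvalues k ≤ b)
    (hcC : ∀ k ∈ SC, c ≤ hC.eigenvalues k) :
    c ≤ a + b := by
  set U : Submodule ℝ (EuclideanSpace ℝ (Fin n)) := span ℝ (⇑hA.eigenvectorBasis '' ↑SA) with hU
  set V : Submodule ℝ (EuclideanSpace ℝ (Fin n)) := span ℝ (⇑hB.eigenvectorBasis '' ↑SB) with hV
  set W : Submodule ℝ (EuclideanSpace ℝ (Fin n)) := span ℝ (⇑hC.eigenvectorBasis '' ↑SC) with hW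
  have hdimU : finrank ℝ U = SA.card := weyl_finrank_span hA.eigenvectorBasis.orthonormal SA
  have hdimV : finrank ℝ V = SB.card := weyl_finrank_span hB.eigenvectorBasis.orthonormal SB
  have hdimW : finrank ℝ W = SC.card := weyl_finrank_span hC.eigenvectorBasis.orthonormal SC
  have hfin : finrank ℝ (EuclideanSpace ℝ (Fin n)) = n := by
    simp [finrank_euclideanSpace]
  have h1 := Submodule.finrank_sup_add_finrank_inf_eq U V
  have h2 := Submodule.finrank_sup_add_finrank_inf_eq (U ⊓ V) W
  have h3 : finrank ℝ ↥(U ⊔ V) ≤ n := le_trans (Submodule.finrank_le _) (le_of_eq hfin)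
  have h4 : finrank ℝ ↥((U ⊓ V) ⊔ W) ≤ n := le_trans (Submodule.finrank_le _) (le_of_eq hfin)
  have hpos : 0 < finrank ℝ ↥((U ⊓ V) ⊓ W) := by omega
  have hne : (U ⊓ V) ⊓ W ≠ ⊥ := by
    intro h
    rw [h, finrank_bot] at hpos
    exact lt_irrefl 0 hpos
  obtain ⟨x, hxmem, hx0⟩ := Submodule.exists_mem_ne_zero_of_ne_bot hne
  have kA := weyl_quad_le hA SA _ hcA hxmem.1.1
  have kB := weyl_quad_le hB SB _ hcB hxmem.1.2
  have kC := weyl_quad_ge hC SC _ hcC hxmem.2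
  have hsplit : (inner ℝ x (Matrix.toEuclideanLin (A + B) x) : ℝ) =
      (inner ℝ x (Matrix.toEuclideanLin A x) : ℝ) + (inner ℝ x (Matrix.toEuclideanLin B x) : ℝ) := by
    rw [map_add, LinearMap.add_apply, inner_add_right]
  have hnorm : (0 : ℝ) < ‖x‖ ^ 2 := pow_pos (norm_pos_iff.mpr hx0) 2
  have hfinal : c * ‖x‖ ^ 2 ≤ (a + b) * ‖x‖ ^ 2 := by
    calc c * ‖x‖ ^ 2 ≤ (inner ℝ x (Matrix.toEuclideanLin (A + B) x) : ℝ) := kC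
      _ = (inner ℝ x (Matrix.toEuclideanLin A x) : ℝ) +
          (inner ℝ x (Matrix.toEuclideanLin B x) : ℝ) := hsplit
      _ ≤ a * ‖x‖ ^ 2 + b * ‖x‖ ^ 2 := add_le_add kA kB
      _ = _ := by ring
  exact le_of_mul_le_mul_right hfinal hnorm


set_option maxHeartbeats 1000000 in

/-- Weyl's inequality: for real symmetric `A, B ∈ ℝ^{n×n}` and `1 ≤ i`, `1 ≤ j` with
`i + j − 1 ≤ n`, we have `λ_{i+j−1}(A+B) ≤ λ_i(A) + λ_j(B)` (eigenvalues in
decreasing order, 1-indexed). -/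
theorem stmt6 {n : ℕ} (A B : Matrix (Fin n) (Fin n) ℝ)
    (hA : A.IsHermitian) (hB : B.IsHermitian)
    (i j : ℕ) (hi : 1 ≤ i) (hj : 1 ≤ j) (hij : i + j - 1 ≤ n) :
    eigDesc (hA.add hB) ⟨i + j - 2, by omega⟩ ≤
      eigDesc hA ⟨i - 1, by omega⟩ + eigDesc hB ⟨j - 1, by omega⟩ := by
  have hn : 1 ≤ n := le_trans (by omega) hij
  have hC : (A + B).IsHermitian := hA.add hB
  have hiA : n - i < n := by omega
  have hjB : n - j < n := by omega
  have hkC : n - (i + j - 1) < n := by omega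
  set SA : Finset (Fin n) :=
    (Finset.Iic (⟨n - i, hiA⟩ : Fin n)).image (Tuple.sort hA.eigenvalues) with hSA
  set SB : Finset (Fin n) :=
    (Finset.Iic (⟨n - j, hjB⟩ : Fin n)).image (Tuple.sort hB.eigenvalues) with hSB
  set SC : Finset (Fin n) :=
    (Finset.Ici (⟨n - (i + j - 1), hkC⟩ : Fin n)).image (Tuple.sort hC.eigenvalues) with hSC
  have hcardA : SA.card = n - i + 1 := by
    rw [hSA, Finset.card_image_of_injective _ (Tuple.sort hA.eigenvalues).injective, Fin.card_Iic]
  have hcardB : SB.card = n - j + 1 := by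
    rw [hSB, Finset.card_image_of_injective _ (Tuple.sort hB.eigenvalues).injective, Fin.card_Iic]
  have hcardC : SC.card = i + j - 1 := by
    rw [hSC, Finset.card_image_of_injective _ (Tuple.sort hC.eigenvalues).injective, Fin.card_Ici]
    simp only []
    omega
  have hcA : ∀ k ∈ SA, hA.eigenvalues k ≤ eigDesc hA ⟨i - 1, by omega⟩ := by
    intro k hk
    obtain ⟨m, hm, rfl⟩ := Finset.mem_image.mp hk
    have hm' : m ≤ (⟨n - i, hiA⟩ : Fin n) := Finset.mem_Iic.mp hm
    have := Tuple.monotone_sort hA.eigenvalues hm'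
    have hrev : (Fin.rev (⟨i - 1, by omega⟩ : Fin n)) = (⟨n - i, hiA⟩ : Fin n) := by
      ext; simp [Fin.val_rev]; omega
    simpa [eigDesc, hrev] using this
  have hcB : ∀ k ∈ SB, hB.eigenvalues k ≤ eigDesc hB ⟨j - 1, by omega⟩ := by
    intro k hk
    obtain ⟨m, hm, rfl⟩ := Finset.mem_image.mp hk
    have hm' : m ≤ (⟨n - j, hjB⟩ : Fin n) := Finset.mem_Iic.mp hm
    have := Tuple.monotone_sort hB.eigenvalues hm'
    have hrev : (Fin.rev (⟨j - 1, by omega⟩ : Fin n)) = (⟨n - j, hjB⟩ : Fin n) := by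
      ext; simp [Fin.val_rev]; omega
    simpa [eigDesc, hrev] using this
  have hcC : ∀ k ∈ SC, eigDesc hC ⟨i + j - 2, by omega⟩ ≤ hC.eigenvalues k := by
    intro k hk
    obtain ⟨m, hm, rfl⟩ := Finset.mem_image.mp hk
    have hm' : (⟨n - (i + j - 1), hkC⟩ : Fin n) ≤ m := Finset.mem_Ici.mp hm
    have := Tuple.monotone_sort hC.eigenvalues hm'
    have hrev : (Fin.rev (⟨i + j - 2, by omega⟩ : Fin n))
        = (⟨n - (i + j - 1), hkC⟩ : Fin n) := by
      ext; simp [Fin.val_rev]; omega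
    simpa [eigDesc, hrev] using this
  have hcard : 2 * n < SA.card + SB.card + SC.card := by
    rw [hcardA, hcardB, hcardC]; omega
  exact weyl_abstract hA hB hC _ _ _ SA SB SC hcard hcA hcB hcC
end WeylAux
end

section
/- Let A ∈ ℝ^{n×n} be symmetric with tr(A) = 0. Then the semidefinite relaxation surp*(A) = max over PSD matrices X with diagonal entries ≤ 1 of −(1/2)⟨A,X⟩ satisfies surp*(A) ≥ (1/4)ℰ(A), where ℰ(A) is the sum of absolute values of the eigenvalues of A. -/
/-- The energy of a real symmetric matrix: the sum of the absolute values of its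
eigenvalues (with multiplicity). -/
noncomputable def energy {n : ℕ} {A : Matrix (Fin n) (Fin n) ℝ}
    (hA : A.IsHermitian) : ℝ :=
  ∑ i, |hA.eigenvalues i|

/-- The semidefinite relaxation of the surplus:
`surp*(A) = sup { −(1/2)⟨A,X⟩ : X PSD, X(i,i) ≤ 1 }`. -/
noncomputable def surpStar {n : ℕ} (A : Matrix (Fin n) (Fin n) ℝ) : ℝ :=
  sSup {t : ℝ | ∃ X : Matrix (Fin n) (Fin n) ℝ, X.PosSemidef ∧ (∀ i, X i i ≤ 1) ∧
    t = -(1 / 2) * ∑ i, ∑ j, A i j * X i j}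

open Matrix

/-- Entries of a PSD matrix with diagonal ≤ 1 are bounded by 1 in absolute value. -/
lemma entry_abs_le_one {n : ℕ} {X : Matrix (Fin n) (Fin n) ℝ} (hX : X.PosSemidef)
    (hd : ∀ i, X i i ≤ 1) (i j : Fin n) : |X i j| ≤ 1 := by
  have hsym : ∀ a b, X a b = X b a := fun a b => by
    conv_lhs => rw [← hX.1]
    simp [conjTranspose_apply]
  have key : ∀ c : ℝ, 0 ≤ X i i + c * X i j + c * X j i + c * c * X j j := by
    intro c
    have h := hX.dotProduct_mulVec_nonneg (Pi.single i (1:ℝ) + Pi.single j c)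
    rw [star_trivial] at h
    have hcalc : (Pi.single i (1:ℝ) + Pi.single j c) ⬝ᵥ
        (X *ᵥ (Pi.single i (1:ℝ) + Pi.single j c))
        = X i i + c * X i j + c * X j i + c * c * X j j := by
      simp only [mulVec_add, dotProduct_add, add_dotProduct, mulVec_single,
        single_dotProduct, dotProduct, Pi.single_apply, ite_mul, zero_mul, one_mul,
        Finset.sum_add_distrib, Finset.sum_ite_eq', Finset.mem_univ, if_true, Pi.add_apply, add_mul, mul_add,
        Pi.smul_apply, op_smul_eq_mul, Matrix.col_apply]
      ring
    rw [hcalc] at h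
    exact h
  have h1 := key 1
  have h2 := key (-1)
  have hii := hd i
  have hjj := hd j
  rw [abs_le]
  constructor <;> nlinarith [hsym i j]

/-- If `A ∈ ℝ^{n×n}` is symmetric with `tr(A) = 0`, then `surp*(A) ≥ (1/4)·ℰ(A)`. -/
theorem stmt9 {n : ℕ} (A : Matrix (Fin n) (Fin n) ℝ) (hA : A.IsHermitian)
    (htr : A.trace = 0) :
    surpStar A ≥ (1 / 4) * energy hA := by
  classical
  set l : Fin n → ℝ := hA.eigenvalues with hl
  set U : Matrix (Fin n) (Fin n) ℝ := (hA.eigenvectorUnitary : Matrix (Fin n) (Fin n) ℝ) with hUdef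
  have hU1 : U * star U = 1 := mem_unitaryGroup_iff.mp hA.eigenvectorUnitary.2
  have hU2 : star U * U = 1 := mem_unitaryGroup_iff'.mp hA.eigenvectorUnitary.2
  have hspec : A = U * diagonal l * star U := by
    have := hA.spectral_theorem
    simpa using this
  set d : Fin n → ℝ := fun i => if l i < 0 then 1 else 0 with hddef
  set X : Matrix (Fin n) (Fin n) ℝ := U * diagonal d * star U with hXdef
  have hdnn : 0 ≤ d := by
    intro k; simp only [hddef]; split <;> norm_num
  have hdle : ∀ k, d k ≤ 1 := by
    intro k; simp only [hddef]; split <;> norm_num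
  have hXpsd : X.PosSemidef := by
    rw [hXdef, Matrix.star_eq_conjTranspose]
    exact (Matrix.PosSemidef.diagonal hdnn).mul_mul_conjTranspose_same U
  -- diagonal bound
  have hXdiag : ∀ i, X i i ≤ 1 := by
    intro i
    have hXe : X i i = ∑ k, d k * (U i k * U i k) := by
      rw [hXdef]
      simp [Matrix.mul_apply, Matrix.mul_diagonal, Matrix.conjTranspose_apply,
        Matrix.diagonal_apply]
      congr 1; funext k; ring
    have hUe : ∑ k, U i k * U i k = 1 := by
      have := congrFun (congrFun hU1 i) i
      simpa [Matrix.mul_apply, Matrix.conjTranspose_apply, Matrix.one_apply] using this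
    rw [hXe, ← hUe]
    apply Finset.sum_le_sum
    intro k _
    nlinarith [hdnn k, hdle k, sq_nonneg (U i k)]
  -- value of the inner product
  have hAX : A * X = U * (diagonal (fun k => l k * d k) * star U) := by
    rw [hspec, hXdef]
    simp only [Matrix.mul_assoc]
    rw [← Matrix.mul_assoc (star U) U, hU2, Matrix.one_mul,
      ← Matrix.mul_assoc (diagonal l) (diagonal d), Matrix.diagonal_mul_diagonal]
  have htrAX : (A * X).trace = ∑ k, l k * d k := by
    rw [hAX, ← Matrix.mul_assoc, Matrix.trace_mul_comm, ← Matrix.mul_assoc, hU2,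
      Matrix.one_mul, Matrix.trace_diagonal]
  have hXsym : ∀ a b, X a b = X b a := fun a b => by
    conv_lhs => rw [← hXpsd.1]
    simp [conjTranspose_apply]
  have hS : ∑ i, ∑ j, A i j * X i j = ∑ k, l k * d k := by
    rw [← htrAX]
    rw [Matrix.trace]
    simp only [Matrix.diag, Matrix.mul_apply]
    rw [Finset.sum_comm]
    apply Finset.sum_congr rfl; intro i _
    apply Finset.sum_congr rfl; intro j _
    have hAsym : A j i = A i j := by
      conv_lhs => rw [← hA]
      simp [conjTranspose_apply]
    rw [hAsym]
  -- the trace of A is the sum of eigenvalues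
  have hsum0 : ∑ k, l k = 0 := by
    have h : A.trace = ∑ k, l k := by
      rw [hspec, Matrix.trace_mul_comm, ← Matrix.mul_assoc, hU2, Matrix.one_mul,
        Matrix.trace_diagonal]
    rw [← h, htr]
  -- arithmetic with positive/negative parts
  set Nn : ℝ := ∑ k, if l k < 0 then -l k else 0 with hNdef
  set Pp : ℝ := ∑ k, if l k < 0 then 0 else l k with hPdef
  have e1 : energy hA = Nn + Pp := by
    rw [energy, hNdef, hPdef, ← Finset.sum_add_distrib]
    apply Finset.sum_congr rfl; intro k _
    rw [← hl]
    by_cases hk : l k < 0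
    · simp [hk, abs_of_neg hk]
    · simp [hk, abs_of_nonneg (not_lt.mp hk)]
  have e2 : (0:ℝ) = -Nn + Pp := by
    rw [← hsum0, hNdef, hPdef, ← Finset.sum_neg_distrib, ← Finset.sum_add_distrib]
    apply Finset.sum_congr rfl; intro k _
    by_cases hk : l k < 0 <;> simp [hk]
  have eS : ∑ k, l k * d k = -Nn := by
    rw [hNdef, ← Finset.sum_neg_distrib]
    apply Finset.sum_congr rfl; intro k _
    simp only [hddef]
    by_cases hk : l k < 0 <;> simp [hk]
  -- membership
  have hmem : (1 / 4) * energy hA ∈ {t : ℝ | ∃ X : Matrix (Fin n) (Fin n) ℝ,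
      X.PosSemidef ∧ (∀ i, X i i ≤ 1) ∧
      t = -(1 / 2) * ∑ i, ∑ j, A i j * X i j} := by
    refine ⟨X, hXpsd, hXdiag, ?_⟩
    rw [hS, eS, e1]
    have : Pp = Nn := by linarith
    rw [this]; ring
  -- bounded above
  have hbdd : BddAbove {t : ℝ | ∃ X : Matrix (Fin n) (Fin n) ℝ,
      X.PosSemidef ∧ (∀ i, X i i ≤ 1) ∧
      t = -(1 / 2) * ∑ i, ∑ j, A i j * X i j} := by
    refine ⟨(1 / 2) * ∑ i, ∑ j, |A i j|, ?_⟩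
    rintro t ⟨Y, hY, hYd, rfl⟩
    have hb : |∑ i, ∑ j, A i j * Y i j| ≤ ∑ i, ∑ j, |A i j| := by
      calc |∑ i, ∑ j, A i j * Y i j| ≤ ∑ i, |∑ j, A i j * Y i j| :=
            Finset.abs_sum_le_sum_abs _ _
        _ ≤ ∑ i, ∑ j, |A i j| := by
            apply Finset.sum_le_sum; intro i _
            calc |∑ j, A i j * Y i j| ≤ ∑ j, |A i j * Y i j| :=
                  Finset.abs_sum_le_sum_abs _ _
              _ ≤ ∑ j, |A i j| := by
                  apply Finset.sum_le_sum; intro j _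
                  rw [abs_mul]
                  have := entry_abs_le_one hY hYd i j
                  nlinarith [abs_nonneg (A i j), abs_nonneg (Y i j)]
    have := neg_abs_le (∑ i, ∑ j, A i j * Y i j)
    nlinarith [abs_nonneg (∑ i, ∑ j, A i j * Y i j)]
  exact le_csSup hbdd hmem
end
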